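/- arXiv:2009.01033 — 7 statements merged into one kernel-verified Lean document; each statement's English description precedes it below -/
import Mathlib

section
/- If there exists a real number λ such that the matrix M(λ) = [[1, a3/2, (a2-λ)/2], [a3/2, λ, a1/2], [(a2-λ)/2, a1/2, a0]] is positive definite, then the binary quartic form f(x,y) = x^4 + a3*x^3*y + a2*x^2*y^2 + a1*x*y^3 + a0*y^4 satisfies f(x,y) > 0 for all real x, y not both zero. -/
theorem stmt4 (a0 a1 a2 a3 : ℝ)
    (h : ∃ L : ℝ, ((!![1, a3/2, (a2-L)/2; a3/2, L, a1/2; (a2-L)/2, a1/2, a0] : Matrix (Fin 3) (Fin 3) ℝ)).PosDef) :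
    ∀ x y : ℝ, (x, y) ≠ (0, 0) →
      0 < x^4 + a3*x^3*y + a2*x^2*y^2 + a1*x*y^3 + a0*y^4 := by
  obtain ⟨L, hL⟩ := h
  intro x y hxy
  have hv : (![x^2, x*y, y^2] : Fin 3 → ℝ) ≠ 0 := by
    intro hz
    have h0 : x^2 = 0 := congrFun hz 0
    have h2 : y^2 = 0 := congrFun hz 2
    exact hxy (by simp [pow_eq_zero_iff] at h0 h2; simp [h0, h2])
  have := hL.dotProduct_mulVec_pos hv
  simp only [Matrix.mulVec, dotProduct, Fin.sum_univ_succ, Fin.sum_univ_zero,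
    Matrix.cons_val_zero, Matrix.cons_val_one, Matrix.head_cons, Matrix.cons_val',
    Matrix.cons_val_fin_one, Matrix.empty_val', RCLike.star_def, starRingEnd_apply,
    star_trivial] at this
  convert this using 1
  · rfl
  simp [Matrix.of_apply, Fin.sum_univ_succ]
  ring
end

section
/- Let b0 = (-a1^2 + a1*a2*a3 - a0*a3^2)/4, b1 = (4*a0 - a2^2 - a1*a3)/4, b2 = a2/2. If 3*b1 + 4*b2^2 ≥ 0, λ0 = (4*b2 + 2*sqrt(3*b1 + 4*b2^2))/3 = a3^2/4 and det(M(λ0)) ≥ 0, then a1 = (4*a2*a3 - a3^3)/8 and a0 = (4*a2 - a3^2)^2/64, and hence M(λ0) is a positive semi-definite matrix of rank 1. -/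
theorem stmt6 (a0 a1 a2 a3 b0 b1 b2 L : ℝ)
    (hb0 : b0 = (-a1^2 + a1*a2*a3 - a0*a3^2)/4)
    (hb1 : b1 = (4*a0 - a2^2 - a1*a3)/4)
    (hb2 : b2 = a2/2)
    (hnn : 3*b1 + 4*b2^2 ≥ 0)
    (hL : L = (4*b2 + 2*Real.sqrt (3*b1 + 4*b2^2))/3)
    (hEq : L = a3^2/4)
    (hdet : ((!![1, a3/2, (a2-L)/2; a3/2, L, a1/2; (a2-L)/2, a1/2, a0] : Matrix (Fin 3) (Fin 3) ℝ)).det ≥ 0) :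
    a1 = (4*a2*a3 - a3^3)/8 ∧ a0 = (4*a2 - a3^2)^2/64 ∧
    ((!![1, a3/2, (a2-L)/2; a3/2, L, a1/2; (a2-L)/2, a1/2, a0] : Matrix (Fin 3) (Fin 3) ℝ)).PosSemidef ∧ ((!![1, a3/2, (a2-L)/2; a3/2, L, a1/2; (a2-L)/2, a1/2, a0] : Matrix (Fin 3) (Fin 3) ℝ)).rank = 1 := by
  subst hb1 hb2 hEq
  -- sqrt equation
  have hs : Real.sqrt (3*((4*a0 - a2^2 - a1*a3)/4) + 4*(a2/2)^2) = (3*(a3^2/4) - 4*(a2/2))/2 := by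
    linarith [hL]
  have hsq := Real.sq_sqrt hnn
  rw [hs] at hsq
  -- determinant
  simp [Matrix.det_fin_three] at hdet
  have ha1 : a1 = (4*a2*a3 - a3^3)/8 := by
    have h1 : (a1 - (4*a2*a3 - a3^3)/8)^2 ≤ 0 := by nlinarith [hdet]
    have h2 : (a1 - (4*a2*a3 - a3^3)/8)^2 ≥ 0 := sq_nonneg _
    nlinarith [h1, h2]
  have ha0 : a0 = (4*a2 - a3^2)^2/64 := by
    linear_combination (-1/3) * hsq + (a3/4) * ha1
  set A : Matrix (Fin 1) (Fin 3) ℝ := !![1, a3/2, (a2 - a3^2/4)/2] with hA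
  have hM : (!![1, a3/2, (a2-a3^2/4)/2; a3/2, a3^2/4, a1/2; (a2-a3^2/4)/2, a1/2, a0] : Matrix (Fin 3) (Fin 3) ℝ) = A.conjTranspose * A := by
    ext i j
    fin_cases i <;> fin_cases j <;>
      simp [hA, Matrix.mul_apply, Fin.sum_univ_succ, Matrix.conjTranspose_apply, ha1, ha0] <;>
      ring
  refine ⟨ha1, ha0, ?_, ?_⟩
  · rw [hM]; exact Matrix.posSemidef_conjTranspose_mul_self A
  · rw [hM, Matrix.rank_conjTranspose_mul_self]
    have hle : A.rank ≤ 1 := by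
      simpa using A.rank_le_card_height
    have hne : A.rank ≠ 0 := by
      intro h
      rw [Matrix.rank, Submodule.finrank_eq_zero, LinearMap.range_eq_bot] at h
      have h1 := congrFun (LinearMap.ext_iff.mp h (Pi.single 0 1)) 0
      simp [hA, Matrix.mulVecLin_apply, Matrix.mulVec_single] at h1
    omega
end

section
/- If λ0 ≥ a3^2/4 and -(1/4)λ0^3 + b2*λ0^2 + b1*λ0 + b0 ≥ 0, where b0 = (-a1^2 + a1*a2*a3 - a0*a3^2)/4, b1 = (4*a0 - a2^2 - a1*a3)/4, b2 = a2/2, 3*b1 + 4*b2^2 ≥ 0 and λ0 = (4*b2 + 2*sqrt(3*b1 + 4*b2^2))/3, then the quartic form f(x,y) = x^4 + a3*x^3*y + a2*x^2*y^2 + a1*x*y^3 + a0*y^4 satisfies f(x,y) ≥ 0 for all real x, y. -/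
lemma quad_aux (A B C u v : ℝ) (hA : 0 < A) (hD : 0 ≤ 4*A*C - B^2) :
    0 ≤ A*u^2 + B*u*v + C*v^2 := by
  nlinarith [sq_nonneg (2*A*u + B*v), mul_nonneg hD (sq_nonneg v), hA]

theorem stmt7 (a0 a1 a2 a3 b0 b1 b2 L : ℝ)
    (hb0 : b0 = (-a1^2 + a1*a2*a3 - a0*a3^2)/4)
    (hb1 : b1 = (4*a0 - a2^2 - a1*a3)/4)
    (hb2 : b2 = a2/2)
    (hnn : 3*b1 + 4*b2^2 ≥ 0)
    (hL : L = (4*b2 + 2*Real.sqrt (3*b1 + 4*b2^2))/3)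
    (h1 : L ≥ a3^2/4)
    (h2 : -(1/4)*L^3 + b2*L^2 + b1*L + b0 ≥ 0) :
    ∀ x y : ℝ, 0 ≤ x^4 + a3*x^3*y + a2*x^2*y^2 + a1*x*y^3 + a0*y^4 := by
  intro x y
  have hs2 : (Real.sqrt (3*b1 + 4*b2^2))^2 = 3*b1 + 4*b2^2 := Real.sq_sqrt hnn
  -- derivative of cubic vanishes at L
  have hgp : -(3/4)*L^2 + 2*b2*L + b1 = 0 := by
    rw [hL]; linear_combination (-(1/3 : ℝ)) * hs2
  obtain ⟨t, ht⟩ : ∃ t : ℝ, t = (a2 - L)/2 := ⟨_, rfl⟩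
  obtain ⟨A, hAdef⟩ : ∃ A : ℝ, A = L - a3^2/4 := ⟨_, rfl⟩
  obtain ⟨B, hBdef⟩ : ∃ B : ℝ, B = a1 - a3*t := ⟨_, rfl⟩
  obtain ⟨C, hCdef⟩ : ∃ C : ℝ, C = a0 - t^2 := ⟨_, rfl⟩
  have hA : 0 ≤ A := by rw [hAdef]; linarith
  have hD : 0 ≤ 4*A*C - B^2 := by
    have h : 4*A*C - B^2 = 4*(-(1/4)*L^3 + b2*L^2 + b1*L + b0) := by
      rw [hAdef, hBdef, hCdef, ht, hb0, hb1, hb2]; ring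
    rw [h]; linarith
  have hrel : 4*C + 4*A*t - a3*B = 0 := by
    have h : 4*C + 4*A*t - a3*B = 4*(-(3/4)*L^2 + 2*b2*L + b1) := by
      rw [hAdef, hBdef, hCdef, ht, hb1, hb2]; ring
    rw [h, hgp]; ring
  have hf : x^4 + a3*x^3*y + a2*x^2*y^2 + a1*x*y^3 + a0*y^4
      = (x^2 + (a3/2)*x*y + t*y^2)^2 + y^2*(A*x^2 + B*x*y + C*y^2) := by
    rw [hAdef, hBdef, hCdef, ht]; ring
  rw [hf]
  rcases eq_or_lt_of_le hA with hA0 | hApos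
  · -- A = 0 : then B = 0 and C = 0
    rw [← hA0] at hD
    have hB2 : B^2 = 0 := le_antisymm (by linarith) (sq_nonneg B)
    have hB0 : B = 0 := by
      exact pow_eq_zero_iff (two_ne_zero) |>.mp hB2
    have hC0 : C = 0 := by rw [← hA0, hB0] at hrel; linarith
    rw [← hA0, hB0, hC0]
    nlinarith [sq_nonneg (x^2 + (a3/2)*x*y + t*y^2)]
  · have hQ : 0 ≤ y^2*(A*x^2 + B*x*y + C*y^2) := by
      have h := quad_aux A B C (x*y) (y^2) hApos hD
      have heq : y^2*(A*x^2 + B*x*y + C*y^2)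
          = A*(x*y)^2 + B*(x*y)*(y^2) + C*(y^2)^2 := by ring
      rw [heq]; exact h
    have := sq_nonneg (x^2 + (a3/2)*x*y + t*y^2)
    linarith
end

section
/- (Theorem 2, definite direction) Let b0 = (-a1^2 + a1*a2*a3 - a0*a3^2)/4, b1 = (4*a0 - a2^2 - a1*a3)/4, b2 = a2/2, and suppose 3*b1 + 4*b2^2 ≥ 0 with λ0 = (4*b2 + 2*sqrt(3*b1 + 4*b2^2))/3. If λ0 > a3^2/4 and -(1/4)λ0^3 + b2*λ0^2 + b1*λ0 + b0 > 0, then f(x,y) = x^4 + a3*x^3*y + a2*x^2*y^2 + a1*x*y^3 + a0*y^4 > 0 for all real (x,y) ≠ (0,0). -/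
theorem stmt8 (a0 a1 a2 a3 b0 b1 b2 L : ℝ)
    (hb0 : b0 = (-a1^2 + a1*a2*a3 - a0*a3^2)/4)
    (hb1 : b1 = (4*a0 - a2^2 - a1*a3)/4)
    (hb2 : b2 = a2/2)
    (hnn : 3*b1 + 4*b2^2 ≥ 0)
    (hL : L = (4*b2 + 2*Real.sqrt (3*b1 + 4*b2^2))/3)
    (h1 : L > a3^2/4)
    (h2 : -(1/4)*L^3 + b2*L^2 + b1*L + b0 > 0) :
    ∀ x y : ℝ, (x, y) ≠ (0, 0) →
      0 < x^4 + a3*x^3*y + a2*x^2*y^2 + a1*x*y^3 + a0*y^4 := by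
  intro x y hxy
  subst hb0 hb1 hb2
  set t : ℝ := (a2 - L)/2 with ht
  have hA : L - a3^2/4 > 0 := by linarith
  have hD : 4*(L - a3^2/4)*(a0 - t^2) - (a1 - a3*t)^2 > 0 := by
    rw [ht]; nlinarith [h2]
  rcases eq_or_ne y 0 with hy | hy
  · subst hy
    have hx : x ≠ 0 := by simpa using hxy
    have : 0 < x^4 := by positivity
    nlinarith [this]
  · have hy4 : (0:ℝ) < y^4 := by positivity
    have key : 4*(L - a3^2/4)*(x^4 + a3*x^3*y + a2*x^2*y^2 + a1*x*y^3 + a0*y^4)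
        = 4*(L - a3^2/4)*(x^2 + a3/2*x*y + t*y^2)^2
          + (2*(L - a3^2/4)*(x*y) + (a1 - a3*t)*y^2)^2
          + (4*(L - a3^2/4)*(a0 - t^2) - (a1 - a3*t)^2)*y^4 := by
      rw [ht]; ring
    nlinarith [key, mul_nonneg hA.le (sq_nonneg (x^2 + a3/2*x*y + t*y^2)),
      sq_nonneg (2*(L - a3^2/4)*(x*y) + (a1 - a3*t)*y^2),
      mul_pos hD hy4, hA]
end

section
/- (Theorem 2, converse for positive definiteness) If the form f(x,y) = x^4 + a3*x^3*y + a2*x^2*y^2 + a1*x*y^3 + a0*y^4 satisfies f(x,y) > 0 for all real (x,y) ≠ (0,0), then with b0 = (-a1^2 + a1*a2*a3 - a0*a3^2)/4, b1 = (4*a0 - a2^2 - a1*a3)/4, b2 = a2/2 one has 3*b1 + 4*b2^2 ≥ 0, and λ0 = (4*b2 + 2*sqrt(3*b1 + 4*b2^2))/3 satisfies λ0 > a3^2/4 and -(1/4)λ0^3 + b2*λ0^2 + b1*λ0 + b0 > 0. -/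
open Polynomial in
lemma quartic_factor (a0 a1 a2 a3 : ℝ)
    (hpos : ∀ x : ℝ, 0 < x^4 + a3*x^3 + a2*x^2 + a1*x + a0) :
    ∃ p q r s : ℝ, q ≠ 0 ∧ 0 < s ∧
      a3 = -2*(p+r) ∧ a2 = p^2+q^2+r^2+s^2+4*p*r ∧
      a1 = -2*p*(r^2+s^2)-2*r*(p^2+q^2) ∧ a0 = (p^2+q^2)*(r^2+s^2) := by
  -- get a complex root
  have hdeg : (X^4 + C (a3:ℂ) * X^3 + C (a2:ℂ) * X^2 + C (a1:ℂ) * X + C (a0:ℂ)).degree = 4 := by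
    compute_degree!
  obtain ⟨z, hz'⟩ := Complex.exists_root
    (f := X^4 + C (a3:ℂ) * X^3 + C (a2:ℂ) * X^2 + C (a1:ℂ) * X + C (a0:ℂ)) (by rw [hdeg]; norm_num)
  simp only [IsRoot, eval_add, eval_mul, eval_pow, eval_C, eval_X] at hz'
  have hz : z^4 + a3*z^3 + a2*z^2 + a1*z + a0 = 0 := by linear_combination hz'
  set p := z.re with hp; set q := z.im with hq
  have hzpq : z = (p:ℂ) + (q:ℂ)*Complex.I := (Complex.re_add_im z).symm
  rw [hzpq] at hz
  have key : ((p^4 - 6*p^2*q^2 + q^4 + a3*(p^3-3*p*q^2) + a2*(p^2-q^2) + a1*p + a0 : ℝ) : ℂ)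
      + ((4*p^3*q - 4*p*q^3 + a3*(3*p^2*q - q^3) + a2*(2*p*q) + a1*q : ℝ) : ℂ) * Complex.I = 0 := by
    push_cast
    linear_combination hz + (-6*(p:ℂ)^2*q^2 - 4*p*q^3*Complex.I - q^4*(Complex.I^2-1)
      - 3*a3*p*q^2 - a3*q^3*Complex.I - a2*q^2) * Complex.I_sq
  have E1 : p^4 - 6*p^2*q^2 + q^4 + a3*(p^3-3*p*q^2) + a2*(p^2-q^2) + a1*p + a0 = 0 := by
    have h := congrArg Complex.re key
    simp only [Complex.add_re, Complex.mul_re, Complex.ofReal_re, Complex.ofReal_im,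
      Complex.I_re, Complex.I_im, Complex.zero_re, mul_zero, zero_mul, sub_zero,
      add_zero, mul_one, zero_sub] at h
    linarith [h]
  have E2 : 4*p^3*q - 4*p*q^3 + a3*(3*p^2*q - q^3) + a2*(2*p*q) + a1*q = 0 := by
    have h := congrArg Complex.im key
    simp only [Complex.add_im, Complex.mul_im, Complex.ofReal_re, Complex.ofReal_im,
      Complex.I_re, Complex.I_im, Complex.zero_im, mul_zero, zero_mul, sub_zero,
      add_zero, zero_add, mul_one] at h
    linarith [h]
  have hq0 : q ≠ 0 := by
    intro h
    have := hpos p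
    rw [h] at E1
    nlinarith [E1, this]
  set c : ℝ := a3 + 2*p with hc
  set d : ℝ := a2 + 2*p*c - p^2 - q^2 with hd
  have hE2' : 4*p^3 - 4*p*q^2 + a3*(3*p^2 - q^2) + a2*(2*p) + a1 = 0 := by
    have : q * (4*p^3 - 4*p*q^2 + a3*(3*p^2 - q^2) + a2*(2*p) + a1) = 0 := by
      linear_combination E2
    rcases mul_eq_zero.mp this with h | h
    · exact absurd h hq0
    · exact h
  have he : a1 + 2*p*d - (p^2+q^2)*c = 0 := by
    rw [hd, hc]; linear_combination hE2'
  have hf : a0 - (p^2+q^2)*d = 0 := by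
    rw [hd, hc]; linear_combination E1 - p * hE2'
  have hfac : ∀ x : ℝ, x^4 + a3*x^3 + a2*x^2 + a1*x + a0
      = (x^2 - 2*p*x + (p^2+q^2)) * (x^2 + c*x + d) := by
    intro x
    linear_combination x * he + hf - x^3 * hc - x^2 * hd
  -- the quotient quadratic is positive everywhere
  have hquot : ∀ x : ℝ, 0 < x^2 + c*x + d := by
    intro x
    have h1 : 0 < x^2 - 2*p*x + (p^2+q^2) := by
      have : 0 < q^2 := by positivity
      nlinarith [sq_nonneg (x - p)]
    have h2 : 0 < (x^2 - 2*p*x + (p^2+q^2)) * (x^2 + c*x + d) := by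
      rw [← hfac]; exact hpos x
    by_contra h
    push_neg at h
    nlinarith
  have hds : 0 < d - c^2/4 := by
    have := hquot (-c/2)
    nlinarith
  set s0 : ℝ := Real.sqrt (d - c^2/4) with hs0
  have hs2 : s0^2 = d - c^2/4 := Real.sq_sqrt hds.le
  refine ⟨p, q, -c/2, s0, hq0, Real.sqrt_pos.mpr hds, ?_, ?_, ?_, ?_⟩
  · rw [hc]; ring
  · linear_combination -hd - hs2
  · linear_combination he + 2*p*hs2
  · linear_combination hf - (p^2+q^2)*hs2

set_option maxHeartbeats 1000000 in
theorem stmt9 (a0 a1 a2 a3 b0 b1 b2 : ℝ)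
    (hb0 : b0 = (-a1^2 + a1*a2*a3 - a0*a3^2)/4)
    (hb1 : b1 = (4*a0 - a2^2 - a1*a3)/4)
    (hb2 : b2 = a2/2)
    (hpos : ∀ x y : ℝ, (x, y) ≠ (0, 0) →
      0 < x^4 + a3*x^3*y + a2*x^2*y^2 + a1*x*y^3 + a0*y^4) :
    3*b1 + 4*b2^2 ≥ 0 ∧
    (4*b2 + 2*Real.sqrt (3*b1 + 4*b2^2))/3 > a3^2/4 ∧
    -(1/4)*((4*b2 + 2*Real.sqrt (3*b1 + 4*b2^2))/3)^3
      + b2*((4*b2 + 2*Real.sqrt (3*b1 + 4*b2^2))/3)^2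
      + b1*((4*b2 + 2*Real.sqrt (3*b1 + 4*b2^2))/3) + b0 > 0 := by
  have hpos' : ∀ x : ℝ, 0 < x^4 + a3*x^3 + a2*x^2 + a1*x + a0 := by
    intro x
    have h := hpos x 1 (by simp)
    simp only [one_pow, mul_one] at h
    exact h
  obtain ⟨p, q, r, s, hq0, hs_pos, ha3, ha2, ha1, ha0⟩ := quartic_factor a0 a1 a2 a3 hpos'
  have hq2 : 0 < q^2 := by positivity
  have hs2p : 0 < s^2 := by positivity
  have hqs2 : 0 ≤ q^2*s^2 := by positivity
  have hI : 4*(3*b1 + 4*b2^2) = ((p-r)^2+q^2+s^2)^2 + 12*(q^2*s^2) := by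
    rw [hb1, hb2, ha0, ha1, ha2, ha3]; ring
  have hInn : 0 ≤ 3*b1 + 4*b2^2 := by
    have := sq_nonneg ((p-r)^2+q^2+s^2)
    linarith [hI]
  obtain ⟨S, hSdef⟩ : ∃ x : ℝ, x = Real.sqrt (3*b1 + 4*b2^2) := ⟨_, rfl⟩
  have hS0 : 0 ≤ S := by rw [hSdef]; exact Real.sqrt_nonneg _
  have hS2 : S^2 = 3*b1 + 4*b2^2 := by rw [hSdef]; exact Real.sq_sqrt hInn
  have hS2' : 4*S^2 = ((p-r)^2+q^2+s^2)^2 + 12*(q^2*s^2) := by rw [hS2]; linarith [hI]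
  have hSpos : 0 < S := by
    have h7 : 0 < (p-r)^2+q^2+s^2 := by linarith [sq_nonneg (p-r), hq2, hs2p]
    have h8 : 0 < ((p-r)^2+q^2+s^2)^2 := pow_pos h7 2
    have h9 : 0 < 4*S^2 := by linarith [hS2', hqs2]
    nlinarith [hS0, h9]
  refine ⟨hInn, ?_, ?_⟩
  · -- part (ii)
    rw [← hSdef]
    have key : (4*b2 + 2*S)/3 - a3^2/4 = (2*S - ((p-r)^2 - 2*(q^2+s^2)))/3 := by
      rw [hb2, ha2, ha3]; ring
    have h2 : (p-r)^2 - 2*(q^2+s^2) < 2*S := by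
      rcases le_or_gt ((p-r)^2 - 2*(q^2+s^2)) 0 with h | h
      · linarith
      · have hd : 4*S^2 - ((p-r)^2 - 2*(q^2+s^2))^2
            = 3*((q^2+s^2)*(2*(p-r)^2 - (q^2+s^2))) + 12*(q^2*s^2) := by
          linear_combination hS2'
        have hE : 0 < q^2+s^2 := by linarith
        have h3 : 0 < (q^2+s^2)*(2*(p-r)^2 - (q^2+s^2)) :=
          mul_pos hE (by linarith)
        have hgt : ((p-r)^2 - 2*(q^2+s^2))^2 < 4*S^2 := by linarith [hd, h3, hqs2]
        nlinarith [hgt, h, hS0]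
    linarith [key, h2]
  · -- part (iii)
    rw [← hSdef]
    obtain ⟨ls, hls⟩ : ∃ x : ℝ, x = ((p^2+q^2+r^2+s^2+4*p*r) - 2*S)/3 := ⟨_, rfl⟩
    obtain ⟨u, hu⟩ : ∃ x : ℝ, x = p^2+q^2+r^2+s^2 - ls := ⟨_, rfl⟩
    obtain ⟨v, hv⟩ : ∃ x : ℝ, x = 2*p*r - 2*q*s - ls := ⟨_, rfl⟩
    obtain ⟨w, hw⟩ : ∃ x : ℝ, x = 2*p*r + 2*q*s - ls := ⟨_, rfl⟩
    have h_sum : u + v + w = 2*S := by rw [hu, hv, hw, hls]; ring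
    have h_sym : u*v + u*w + v*w = 0 := by
      rw [hu, hv, hw, hls]; linear_combination (1/3)*hS2'
    have h_uv : u - v = (p-r)^2 + (q+s)^2 := by rw [hu, hv]; ring
    have h_uw : u - w = (p-r)^2 + (q-s)^2 := by rw [hu, hw]; ring
    have h_vw : w - v = 4*q*s := by rw [hv, hw]; ring
    have hgid : -(1/4)*((4*b2 + 2*S)/3)^3 + b2*((4*b2 + 2*S)/3)^2 + b1*((4*b2 + 2*S)/3) + b0
        = -(u*v*w)/4 := by
      rw [hu, hv, hw, hls, hb0, hb1, hb2, ha0, ha1, ha2, ha3]; ring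
    have ht : 0 < v + w := by
      by_contra hcon
      push_neg at hcon
      have hu_ge : 0 ≤ u + (v + w) := by linarith [h_sum, hS0]
      have hprod0 : 0 ≤ (u + (v + w)) * (-(v + w)) :=
        mul_nonneg hu_ge (by linarith)
      have hexp : (u + (v + w)) * (-(v + w)) = -(u*v) - (u*w) - (v+w)^2 := by ring
      have h1 : (v-w)^2 = (v+w)^2 + 4*(u*v) + 4*(u*w) := by
        linear_combination (-4)*h_sym
      have h2 : (v-w)^2 = 16*(q^2*s^2) := by linear_combination ((w-v)+4*q*s)*h_vw
      have hqsp : 0 < q^2*s^2 := mul_pos hq2 hs2p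
      linarith [h1, h2, hqsp, hprod0, hexp, sq_nonneg (v+w)]
    have hu_pos : 0 < u := by
      linarith [h_uv, h_uw, ht, sq_nonneg (p-r), sq_nonneg (q+s), sq_nonneg (q-s)]
    have h_prod : u*v*w = -(u^2*(v+w)) := by linear_combination u*h_sym
    have final : 0 < -(u*v*w)/4 := by
      rw [h_prod]
      have : 0 < u^2*(v+w) := by positivity
      linarith
    linarith [hgid, final]
end

section
/- (Theorem 2, converse for positive semi-definiteness) If f(x,y) = x^4 + a3*x^3*y + a2*x^2*y^2 + a1*x*y^3 + a0*y^4 satisfies f(x,y) ≥ 0 for all real x, y, then with b0 = (-a1^2 + a1*a2*a3 - a0*a3^2)/4, b1 = (4*a0 - a2^2 - a1*a3)/4, b2 = a2/2 one has 3*b1 + 4*b2^2 ≥ 0, and λ0 = (4*b2 + 2*sqrt(3*b1 + 4*b2^2))/3 satisfies λ0 ≥ a3^2/4 and -(1/4)λ0^3 + b2*λ0^2 + b1*λ0 + b0 ≥ 0. -/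
set_option maxHeartbeats 1000000

open Polynomial

lemma quartic_factor_s10 (a3 a2 a1 a0 : ℝ)
    (h : ∀ x : ℝ, 0 < x^4 + a3*x^3 + a2*x^2 + a1*x + a0) :
    ∃ b c d e : ℝ, b^2 ≤ 4*c ∧ d^2 ≤ 4*e ∧
      a3 = b + d ∧ a2 = c + e + b*d ∧ a1 = b*e + d*c ∧ a0 = c*e := by
  set p : Polynomial ℂ :=
    X^4 + C (a3:ℂ) * X^3 + C (a2:ℂ) * X^2 + C (a1:ℂ) * X + C (a0:ℂ) with hp
  have hdeg : p.degree = 4 := by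
    rw [hp]; compute_degree!
  obtain ⟨z, hz⟩ := Complex.exists_root (f := p) (by rw [hdeg]; norm_num)
  have hz' : z^4 + (a3:ℂ)*z^3 + (a2:ℂ)*z^2 + (a1:ℂ)*z + (a0:ℂ) = 0 := by
    have := hz
    simp only [hp, IsRoot, eval_add, eval_mul, eval_pow, eval_C, eval_X] at this
    linear_combination this
  have him : z.im ≠ 0 := by
    intro h0
    have hzre : z = (z.re : ℂ) := Complex.ext rfl (by simp [h0])
    rw [hzre] at hz'
    have hc : ((z.re^4 + a3*z.re^3 + a2*z.re^2 + a1*z.re + a0 : ℝ) : ℂ) = 0 := by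
      push_cast; linear_combination hz'
    have := Complex.ofReal_eq_zero.mp hc
    exact absurd this (ne_of_gt (h z.re))
  set b : ℝ := -(2*z.re) with hb_def
  set c : ℝ := z.re^2 + z.im^2 with hc_def
  have hquad : z^2 + (b:ℂ)*z + (c:ℂ) = 0 := by
    have h1 := Complex.add_conj z
    have h2 := Complex.mul_conj z
    rw [Complex.normSq_apply] at h2
    push_cast [hb_def, hc_def]
    push_cast at h1 h2
    linear_combination z * h1 - h2
  set d : ℝ := a3 - b with hd_def
  set e : ℝ := a2 - c - b*d with he_def
  set r1 : ℝ := a1 - (b*e + d*c) with hr1_def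
  set r0 : ℝ := a0 - c*e with hr0_def
  have hlin : (r1:ℂ)*z + (r0:ℂ) = 0 := by
    push_cast [hr1_def, hr0_def, he_def, hd_def]
    linear_combination hz' - (z^2 + ((a3:ℂ) - (b:ℂ))*z + ((a2:ℂ) - (c:ℂ) - (b:ℂ)*((a3:ℂ)-(b:ℂ))))*hquad
  have hr1 : r1 = 0 := by
    have := congrArg Complex.im hlin
    simp [Complex.add_im, Complex.mul_im] at this
    rcases this with h | h
    · exact h
    · exact absurd h him
  have hr0 : r0 = 0 := by
    have := congrArg Complex.re hlin
    simp [Complex.add_re, Complex.mul_re, hr1] at this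
    exact this
  have hbc : b^2 < 4*c := by
    rw [hb_def, hc_def]
    have : z.im^2 > 0 := by positivity
    nlinarith
  have ha3 : a3 = b + d := by rw [hd_def]; ring
  have ha2 : a2 = c + e + b*d := by rw [he_def]; ring
  have ha1 : a1 = b*e + d*c := by
    have : a1 - (b*e + d*c) = 0 := hr1
    linarith
  have ha0 : a0 = c*e := by
    have : a0 - c*e = 0 := hr0
    linarith
  have hfac : ∀ x : ℝ, x^4 + a3*x^3 + a2*x^2 + a1*x + a0
      = (x^2 + b*x + c)*(x^2 + d*x + e) := by
    intro x
    linear_combination x^3*ha3 + x^2*ha2 + x*ha1 + ha0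
  clear_value b c d e r1 r0
  have hq1 : 0 < (-d/2)^2 + b*(-d/2) + c := by nlinarith [sq_nonneg (d - b), hbc]
  have hprod := h (-d/2)
  rw [hfac] at hprod
  have hq2 : 0 < (-d/2)^2 + d*(-d/2) + e := by nlinarith [hq1, hprod]
  exact ⟨b, c, d, e, le_of_lt hbc, by nlinarith [hq2], ha3, ha2, ha1, ha0⟩

lemma quartic_alg (a0 a1 a2 a3 b0 b1 b2 u v w t : ℝ)
    (hb0 : b0 = (-a1^2 + a1*a2*a3 - a0*a3^2)/4)
    (hb1 : b1 = (4*a0 - a2^2 - a1*a3)/4)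
    (hb2 : b2 = a2/2)
    (huv : u^2 ≤ 4*v) (hwt : w^2 ≤ 4*t)
    (h3 : a3 = u + w) (h2 : a2 = v + t + u*w) (h1 : a1 = u*t + w*v) (h0 : a0 = v*t) :
    3*b1 + 4*b2^2 ≥ 0 ∧
    (4*b2 + 2*Real.sqrt (3*b1 + 4*b2^2))/3 ≥ a3^2/4 ∧
    -(1/4)*((4*b2 + 2*Real.sqrt (3*b1 + 4*b2^2))/3)^3
      + b2*((4*b2 + 2*Real.sqrt (3*b1 + 4*b2^2))/3)^2
      + b1*((4*b2 + 2*Real.sqrt (3*b1 + 4*b2^2))/3) + b0 ≥ 0 := by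
  have hE1 : (0:ℝ) ≤ v - u^2/4 := by linarith
  have hE2 : (0:ℝ) ≤ t - w^2/4 := by linarith
  have hSnn : 0 ≤ 3*b1 + 4*b2^2 := by
    subst hb1 hb2 h2 h1 h0 h3
    nlinarith [sq_nonneg ((v - u^2/4) + (t - w^2/4) - 2*((w-u)/4)^2),
      mul_nonneg (add_nonneg (sq_nonneg ((w-u)/4)) hE1)
        (add_nonneg (sq_nonneg ((w-u)/4)) hE2)]
  set s := Real.sqrt (3*b1 + 4*b2^2) with hsdef
  have hs0 : 0 ≤ s := Real.sqrt_nonneg _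
  have hs2 : s^2 = 3*b1 + 4*b2^2 := by rw [hsdef]; exact Real.sq_sqrt hSnn
  clear_value s
  have c2 : (4*b2 + 2*s)/3 ≥ a3^2/4 := by
    subst hb1 hb2 h2 h1 h0 h3
    have hs2' : s^2 = (12*(v*t) + (v+t+u*w)^2 - 3*(u*t+w*v)*(u+w))/4 := by
      rw [hs2]; ring
    rcases le_or_gt (2*((w-u)/4)^2) ((v - u^2/4) + (t - w^2/4)) with hp | hp
    · nlinarith [hs0, hp]
    · have hkey : ((v-u^2/4)+(t-w^2/4)-2*((w-u)/4)^2)^2 ≤ s^2 := by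
        rw [hs2']
        nlinarith [mul_nonneg (add_nonneg hE1 hE2)
            (le_of_lt (by linarith : (0:ℝ) < 2*((w-u)/4)^2 - ((v-u^2/4)+(t-w^2/4)))),
          mul_nonneg hE1 hE2, sq_nonneg ((v-u^2/4)-(t-w^2/4))]
      nlinarith [hkey, hs0]
  have c3 : -(1/4)*((4*b2 + 2*s)/3)^3 + b2*((4*b2 + 2*s)/3)^2
      + b1*((4*b2 + 2*s)/3) + b0 ≥ 0 := by
    subst hb0 hb1 hb2 h2 h1 h0 h3
    have hs2' : s^2 = (12*(v*t) + (v+t+u*w)^2 - 3*(u*t+w*v)*(u+w))/4 := by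
      rw [hs2]; ring
    obtain ⟨P, hP⟩ : ∃ P:ℝ, P = (12*(v*t) + (v+t+u*w)^2 - 3*(u*t+w*v)*(u+w))/4 := ⟨_, rfl⟩
    obtain ⟨Qp, hQp⟩ : ∃ q:ℝ, q = 2*(v+t+u*w)^3/27 - 8*(v*t)*(v+t+u*w)/3
      - (u*t+w*v)*(v+t+u*w)*(u+w)/3 + (u*t+w*v)^2 + (v*t)*(u+w)^2 := ⟨_, rfl⟩
    have hs2P : s^2 = P := by rw [hP]; exact hs2'
    have hP0 : 0 ≤ P := by rw [← hs2P]; positivity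
    have hred : -(1/4)*((2*(v+t+u*w) + 2*s)/3)^3
        + ((v+t+u*w)/2)*((2*(v+t+u*w) + 2*s)/3)^2
        + ((4*(v*t) - (v+t+u*w)^2 - (u*t+w*v)*(u+w))/4)*((2*(v+t+u*w) + 2*s)/3)
        + (-(u*t+w*v)^2 + (u*t+w*v)*(v+t+u*w)*(u+w) - (v*t)*(u+w)^2)/4
        = 4/27*P*s - Qp/4 := by
      linear_combination (-2/27*s)*hs2' + (-4/27*s)*hP + (1/4)*hQp
    have hfin : 0 ≤ 4/27*P*s - Qp/4 := by
      rcases le_or_gt Qp 0 with hQ | hQ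
      · nlinarith [mul_nonneg hP0 hs0, hQ]
      · obtain ⟨F, hF⟩ : ∃ F:ℝ, F = 16*((w-u)/4)^4
          + 8*((w-u)/4)^2*((v-u^2/4)+(t-w^2/4)) + ((v-u^2/4)-(t-w^2/4))^2 := ⟨_, rfl⟩
        have hident : 256*P^3 - 729*Qp^2 = 432*(v-u^2/4)*(t-w^2/4)*F^2 := by
          rw [hP, hQp, hF]; ring
        have hQ2 : 729*Qp^2 ≤ 256*P^3 := by
          nlinarith [hident, mul_nonneg (mul_nonneg hE1 hE2) (sq_nonneg F)]
        have haa : (16*P*s)^2 = 256*P^3 := by linear_combination (256*P^2) * hs2P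
        have h16 : 27*Qp ≤ 16*P*s := by
          nlinarith [hQ2, hQ, mul_nonneg hP0 hs0, haa]
        linarith [h16]
    linarith [hred, hfin]
  exact ⟨hSnn, c2, c3⟩
theorem stmt10 (a0 a1 a2 a3 b0 b1 b2 : ℝ)
    (hb0 : b0 = (-a1^2 + a1*a2*a3 - a0*a3^2)/4)
    (hb1 : b1 = (4*a0 - a2^2 - a1*a3)/4)
    (hb2 : b2 = a2/2)
    (hpos : ∀ x y : ℝ, 0 ≤ x^4 + a3*x^3*y + a2*x^2*y^2 + a1*x*y^3 + a0*y^4) :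
    3*b1 + 4*b2^2 ≥ 0 ∧
    (4*b2 + 2*Real.sqrt (3*b1 + 4*b2^2))/3 ≥ a3^2/4 ∧
    -(1/4)*((4*b2 + 2*Real.sqrt (3*b1 + 4*b2^2))/3)^3
      + b2*((4*b2 + 2*Real.sqrt (3*b1 + 4*b2^2))/3)^2
      + b1*((4*b2 + 2*Real.sqrt (3*b1 + 4*b2^2))/3) + b0 ≥ 0 := by
  have key : ∀ ε : ℝ, 0 < ε →
      3*(b1+ε) + 4*b2^2 ≥ 0 ∧
      (4*b2 + 2*Real.sqrt (3*(b1+ε) + 4*b2^2))/3 ≥ a3^2/4 ∧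
      -(1/4)*((4*b2 + 2*Real.sqrt (3*(b1+ε) + 4*b2^2))/3)^3
        + b2*((4*b2 + 2*Real.sqrt (3*(b1+ε) + 4*b2^2))/3)^2
        + (b1+ε)*((4*b2 + 2*Real.sqrt (3*(b1+ε) + 4*b2^2))/3) + (b0 - ε*a3^2/4) ≥ 0 := by
    intro ε hε
    have hpos' : ∀ x : ℝ, 0 < x^4 + a3*x^3 + a2*x^2 + a1*x + (a0+ε) := by
      intro x; have := hpos x 1; nlinarith
    obtain ⟨b, c, d, e, hb, hd, e3, e2, e1, e0⟩ := quartic_factor_s10 a3 a2 a1 (a0+ε) hpos'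
    exact quartic_alg (a0+ε) a1 a2 a3 (b0 - ε*a3^2/4) (b1+ε) b2 b c d e
      (by rw [hb0]; ring) (by rw [hb1]; ring) hb2 hb hd e3 e2 e1 e0
  have c1 : 3*b1 + 4*b2^2 ≥ 0 := by
    by_contra hcon
    push_neg at hcon
    have h := (key (-(3*b1 + 4*b2^2)/6) (by linarith)).1
    linarith
  have c2 : (4*b2 + 2*Real.sqrt (3*b1 + 4*b2^2))/3 ≥ a3^2/4 := by
    have hcont : Continuous (fun ε : ℝ => (4*b2 + 2*Real.sqrt (3*(b1+ε) + 4*b2^2))/3) := by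
      continuity
    have htend := (hcont.tendsto 0).mono_left
      (nhdsWithin_le_nhds (s := Set.Ioi (0:ℝ)))
    have hge := ge_of_tendsto htend
      (eventually_nhdsWithin_of_forall (fun ε hε => (key ε hε).2.1))
    simpa using hge
  have c3 : -(1/4)*((4*b2 + 2*Real.sqrt (3*b1 + 4*b2^2))/3)^3
      + b2*((4*b2 + 2*Real.sqrt (3*b1 + 4*b2^2))/3)^2
      + b1*((4*b2 + 2*Real.sqrt (3*b1 + 4*b2^2))/3) + b0 ≥ 0 := by
    have hcont : Continuous (fun ε : ℝ =>
        -(1/4)*((4*b2 + 2*Real.sqrt (3*(b1+ε) + 4*b2^2))/3)^3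
        + b2*((4*b2 + 2*Real.sqrt (3*(b1+ε) + 4*b2^2))/3)^2
        + (b1+ε)*((4*b2 + 2*Real.sqrt (3*(b1+ε) + 4*b2^2))/3) + (b0 - ε*a3^2/4)) := by
      continuity
    have htend := (hcont.tendsto 0).mono_left
      (nhdsWithin_le_nhds (s := Set.Ioi (0:ℝ)))
    have hge := ge_of_tendsto htend
      (eventually_nhdsWithin_of_forall (fun ε hε => (key ε hε).2.2))
    simpa using hge
  exact ⟨c1, c2, c3⟩
end

section
/- The quartic form f(x,y) = x^4 + a3*x^3*y + a2*x^2*y^2 + a1*x*y^3 + a0*y^4 is positive definite (f(x,y) > 0 for all (x,y) ≠ (0,0)) if and only if the matrix M(λ0) = [[1, a3/2, (a2-λ0)/2], [a3/2, λ0, a1/2], [(a2-λ0)/2, a1/2, a0]] is positive definite, where λ0 = (4*b2 + 2*sqrt(3*b1 + 4*b2^2))/3 with b1 = (4*a0 - a2^2 - a1*a3)/4, b2 = a2/2, under the hypothesis 3*b1 + 4*b2^2 ≥ 0. -/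
lemma factor_depressed (p q r : ℝ) (hpos : ∀ u : ℝ, 0 < u^4 + p*u^2 + q*u + r) :
    ∃ m w1 w2 : ℝ, 0 < m^2 + 1 ∧ w1 + w2 = p + m^2 ∧ m*(w2 - w1) = q ∧ w1*w2 = r ∧
      m^2 < 4*w1 ∧ m^2 < 4*w2 := by
  have hr : 0 < r := by have := hpos 0; norm_num at this; linarith
  have hdisc : ∀ m w1 w2 : ℝ, w1 + w2 = p + m^2 → m*(w2-w1) = q → w1*w2 = r →
      m^2 < 4*w1 ∧ m^2 < 4*w2 := by
    intro m w1 w2 h1 h2 h3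
    have hfac : ∀ u : ℝ, u^4 + p*u^2 + q*u + r = (u^2+m*u+w1)*(u^2-m*u+w2) := by
      intro u
      linear_combination (-u^2)*h1 - u*h2 - h3
    constructor
    · by_contra hcon
      push_neg at hcon
      have hD : (0:ℝ) ≤ m^2 - 4*w1 := by linarith
      have hsq : Real.sqrt (m^2-4*w1)^2 = m^2-4*w1 := Real.sq_sqrt hD
      set X := (-m + Real.sqrt (m^2-4*w1))/2 with hX
      have hroot : X^2 + m*X + w1 = 0 := by rw [hX]; linear_combination hsq/4
      have h0 := hpos X
      rw [hfac X, hroot, zero_mul] at h0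
      exact lt_irrefl 0 h0
    · by_contra hcon
      push_neg at hcon
      have hD : (0:ℝ) ≤ m^2 - 4*w2 := by linarith
      have hsq : Real.sqrt (m^2-4*w2)^2 = m^2-4*w2 := Real.sq_sqrt hD
      set X := (m + Real.sqrt (m^2-4*w2))/2 with hX
      have hroot : X^2 - m*X + w2 = 0 := by rw [hX]; linear_combination hsq/4
      have h0 := hpos X
      rw [hfac X, hroot, mul_zero] at h0
      exact lt_irrefl 0 h0
  by_cases hq : q = 0
  · rcases le_or_gt p (2*Real.sqrt r) with hple | hpgt
    · refine ⟨Real.sqrt (2*Real.sqrt r - p), Real.sqrt r, Real.sqrt r, by positivity, ?_, ?_, ?_, ?_, ?_⟩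
      · rw [Real.sq_sqrt (by linarith)]; ring
      · simp [hq]
      · exact Real.mul_self_sqrt hr.le
      all_goals {
        first
        | exact (hdisc _ _ _ (by rw [Real.sq_sqrt (by linarith)]; ring) (by simp [hq])
            (Real.mul_self_sqrt hr.le)).1
        | exact (hdisc _ _ _ (by rw [Real.sq_sqrt (by linarith)]; ring) (by simp [hq])
            (Real.mul_self_sqrt hr.le)).2 }
    · have hrs : Real.sqrt r ^ 2 = r := Real.sq_sqrt hr.le
      have hsnn : 0 ≤ Real.sqrt r := Real.sqrt_nonneg r
      have hD : (0:ℝ) ≤ p^2 - 4*r := by nlinarith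
      have hDs : Real.sqrt (p^2-4*r) ^ 2 = p^2 - 4*r := Real.sq_sqrt hD
      have h1 : (p - Real.sqrt (p^2-4*r))/2 + (p + Real.sqrt (p^2-4*r))/2 = p + (0:ℝ)^2 := by ring
      have h2 : (0:ℝ)*((p + Real.sqrt (p^2-4*r))/2 - (p - Real.sqrt (p^2-4*r))/2) = q := by
        simp [hq]
      have h3 : (p - Real.sqrt (p^2-4*r))/2 * ((p + Real.sqrt (p^2-4*r))/2) = r := by
        linear_combination -hDs/4
      exact ⟨0, _, _, by norm_num, h1, h2, h3, (hdisc _ _ _ h1 h2 h3).1, (hdisc _ _ _ h1 h2 h3).2⟩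
  · -- q ≠ 0 : IVT for the cubic θ^3+2pθ^2+(p^2-4r)θ-q^2
    set C : ℝ → ℝ := fun θ => θ^3 + 2*p*θ^2 + (p^2-4*r)*θ - q^2 with hC
    have hcont : ContinuousOn C (Set.Icc 0 (1 + 2*|p| + |p^2-4*r| + q^2)) := by
      apply Continuous.continuousOn; fun_prop
    set M := 1 + 2*|p| + |p^2-4*r| + q^2 with hM
    have hM1 : (1:ℝ) ≤ M := by have h1 := abs_nonneg p; have h2 := abs_nonneg (p^2-4*r); have h3 := sq_nonneg q; rw [hM]; linarith
    have hC0 : C 0 < 0 := by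
      have : 0 < q^2 := by positivity
      simp [hC]; linarith
    have hCM : 0 ≤ C M := by
      simp only [hC]
      nlinarith [le_abs_self p, neg_abs_le p, le_abs_self (p^2-4*r), neg_abs_le (p^2-4*r),
        abs_nonneg p, abs_nonneg (p^2-4*r), sq_nonneg q, hM1, sq_nonneg (M-1)]
    have hsub : Set.Icc (C 0) (C M) ⊆ C '' Set.Icc 0 M :=
      intermediate_value_Icc (by linarith) hcont
    obtain ⟨θ, hθmem, hθ⟩ := hsub ⟨hC0.le, hCM⟩
    have hθpos : 0 < θ := by
      rcases lt_or_eq_of_le hθmem.1 with h | h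
      · exact h
      · exfalso; rw [← h] at hθ; rw [hθ] at hC0; exact lt_irrefl 0 hC0
    have hm2 : Real.sqrt θ ^ 2 = θ := Real.sq_sqrt hθpos.le
    have hm0 : 0 < Real.sqrt θ := Real.sqrt_pos.2 hθpos
    set m := Real.sqrt θ with hmdef
    set w1 := (p+θ)/2 - q/(2*m) with hw1
    set w2 := (p+θ)/2 + q/(2*m) with hw2
    have h1 : w1 + w2 = p + m^2 := by rw [hw1, hw2]; linear_combination -hm2
    have h2 : m*(w2 - w1) = q := by
      rw [hw1, hw2]
      field_simp
      ring
    have h3 : w1*w2 = r := by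
      rw [hw1, hw2]
      have hCθ : θ^3 + 2*p*θ^2 + (p^2-4*r)*θ - q^2 = 0 := hθ
      field_simp
      linear_combination ((p+θ)^2 - 4*r)*hm2 + hCθ
    exact ⟨m, w1, w2, by positivity, h1, h2, h3, (hdisc _ _ _ h1 h2 h3).1, (hdisc _ _ _ h1 h2 h3).2⟩

set_option maxHeartbeats 1000000 in
theorem stmt11_minors (a0 a1 a2 a3 L : ℝ)
    (hnn : 3*((4*a0 - a2^2 - a1*a3)/4) + 4*(a2/2)^2 ≥ 0)
    (hL : L = (4*(a2/2) + 2*Real.sqrt (3*((4*a0 - a2^2 - a1*a3)/4) + 4*(a2/2)^2))/3)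
    (m w1 w2 : ℝ)
    (h1 : w1 + w2 = (a2 - 3*a3^2/8) + m^2)
    (h2 : m*(w2 - w1) = a1 - a2*a3/2 + a3^3/8)
    (h3 : w1*w2 = a0 - a1*a3/4 + a2*a3^2/16 - 3*a3^4/256)
    (hd1 : m^2 < 4*w1) (hd2 : m^2 < 4*w2) :
    (0 < L - a3^2/4) ∧
    (0 < L*a0 - a1^2/4 - a3^2*a0/4 + a3*a1*(a2-L)/4 - L*(a2-L)^2/4) := by
  obtain ⟨s, hsdef⟩ : ∃ t : ℝ, t = Real.sqrt (3*((4*a0 - a2^2 - a1*a3)/4) + 4*(a2/2)^2) := ⟨_, rfl⟩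
  rw [← hsdef] at hL
  have hs0 : 0 ≤ s := by rw [hsdef]; exact Real.sqrt_nonneg _
  have hs2 : s^2 = 3*((4*a0 - a2^2 - a1*a3)/4) + 4*(a2/2)^2 := by
    rw [hsdef]; exact Real.sq_sqrt hnn
  obtain ⟨U, hUdef⟩ : ∃ t : ℝ, t = Real.sqrt (4*w1 - m^2) := ⟨_, rfl⟩
  obtain ⟨V, hVdef⟩ : ∃ t : ℝ, t = Real.sqrt (4*w2 - m^2) := ⟨_, rfl⟩
  have hU2 : U^2 = 4*w1 - m^2 := by rw [hUdef]; exact Real.sq_sqrt (by linarith)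
  have hV2 : V^2 = 4*w2 - m^2 := by rw [hVdef]; exact Real.sq_sqrt (by linarith)
  have hU0 : 0 < U := by rw [hUdef]; exact Real.sqrt_pos.2 (by linarith)
  have hV0 : 0 < V := by rw [hVdef]; exact Real.sqrt_pos.2 (by linarith)
  clear hnn hsdef hUdef hVdef
  have hw1x : w1 = (U^2 + m^2)/4 := by rw [hU2]; ring
  have hw2x : w2 = (V^2 + m^2)/4 := by rw [hV2]; ring
  have ha2 : a2 = w1 + w2 - m^2 + 3*a3^2/8 := by linarith
  have ha1 : a1 = m*(w2 - w1) + (w1 + w2 - m^2)*a3/2 + a3^3/16 := by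
    linear_combination -h2 - (a3/2)*h1
  have ha0 : a0 = w1*w2 + m*(w2-w1)*a3/4 + (w1+w2-m^2)*a3^2/16 + a3^4/256 := by
    linear_combination -h3 - (a3/4)*h2 - (a3^2/16)*h1
  obtain ⟨μ, hμ⟩ : ∃ μ : ℝ, L = μ + a3^2/4 := ⟨L - a3^2/4, by ring⟩
  obtain ⟨e1, he1⟩ : ∃ t : ℝ, t = -m^2 := ⟨_, rfl⟩
  obtain ⟨e2, he2⟩ : ∃ t : ℝ, t = (U-V)^2/4 := ⟨_, rfl⟩
  obtain ⟨e3, he3⟩ : ∃ t : ℝ, t = (U+V)^2/4 := ⟨_, rfl⟩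
  have f1 : e1 ≤ 0 := by rw [he1]; exact neg_nonpos.2 (sq_nonneg m)
  have f2 : 0 ≤ e2 := by rw [he2]; positivity
  have f3 : e2 < e3 := by rw [he2, he3]; nlinarith [mul_pos hU0 hV0]
  have hSg : 3*μ - (e1+e2+e3) = 2*s := by
    rw [he1, he2, he3]
    have h3L : 3*L = 2*a2 + 2*s := by rw [hL]; ring
    linear_combination (-3)*hμ + h3L + 2*ha2 + 2*hw1x + 2*hw2x
  have hs2c : 4*s^2 = (e1+e2+e3)^2 - 3*(e1*e2+e1*e3+e2*e3) := by
    rw [he1, he2, he3]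
    rw [ha0, ha1, ha2, hw1x, hw2x] at hs2
    linear_combination 4*hs2
  have key : L*a0 - a1^2/4 - a3^2*a0/4 + a3*a1*(a2-L)/4 - L*(a2-L)^2/4
      = -((μ-e1)*(μ-e2)*(μ-e3))/4 := by
    rw [he1, he2, he3, hμ, ha0, ha1, ha2, hw1x, hw2x]; ring
  have hLmu : L - a3^2/4 = μ := by rw [hμ]; ring
  clear hL hs2 hU2 hV2 hw1x hw2x ha2 ha1 ha0 hμ hU0 hV0 he1 he2 he3
  clear h1 h2 h3 hd1 hd2
  have hPh : 3*μ^2 - 2*(e1+e2+e3)*μ + (e1*e2+e1*e3+e2*e3) = 0 := by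
    linear_combination ((3*μ - (e1+e2+e3) + 2*s)/3) * hSg + (1/3)*hs2c
  have hvert : e1+e2+e3 ≤ 3*μ := by linarith
  have hino : e2 < μ := by
    by_contra hcon
    push_neg at hcon
    have hprod : 0 ≤ (e2 - μ)*(3*(e2+μ) - 2*(e1+e2+e3)) :=
      mul_nonneg (by linarith) (by linarith)
    have hA : 0 ≤ (e2 - e1)*(e2 - e3) := by nlinarith [hPh, hprod]
    have hle : e2 ≤ e1 := by nlinarith [hA, f3]
    linarith
  have hsup : μ < e3 := by
    by_contra hcon
    push_neg at hcon
    have hB : 0 ≤ (μ - e3)*(3*(μ+e3) - 2*(e1+e2+e3)) :=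
      mul_nonneg (by linarith) (by linarith)
    have hC : 0 < (e3-e1)*(e3-e2) := mul_pos (by linarith) (by linarith)
    nlinarith [hPh, hB, hC]
  constructor
  · rw [hLmu]; linarith
  · rw [key]
    have hneg := mul_neg_of_pos_of_neg
      (mul_pos (show 0 < μ - e1 by linarith) (show 0 < μ - e2 by linarith))
      (show μ - e3 < 0 by linarith)
    linarith



theorem stmt11 (a0 a1 a2 a3 b1 b2 L : ℝ)
    (hb1 : b1 = (4*a0 - a2^2 - a1*a3)/4)
    (hb2 : b2 = a2/2)
    (hnn : 3*b1 + 4*b2^2 ≥ 0)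
    (hL : L = (4*b2 + 2*Real.sqrt (3*b1 + 4*b2^2))/3) :
    (∀ x y : ℝ, (x, y) ≠ (0, 0) →
      0 < x^4 + a3*x^3*y + a2*x^2*y^2 + a1*x*y^3 + a0*y^4) ↔
    ((!![1, a3/2, (a2-L)/2; a3/2, L, a1/2; (a2-L)/2, a1/2, a0] : Matrix (Fin 3) (Fin 3) ℝ)).PosDef := by
  subst hb1 hb2
  constructor
  · intro hf
    have hx : ∀ x : ℝ, 0 < x^4 + a3*x^3 + a2*x^2 + a1*x + a0 := fun x => by
      simpa using hf x 1 (by simp)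
    have hdep : ∀ u : ℝ, 0 < u^4 + (a2 - 3*a3^2/8)*u^2 + (a1 - a2*a3/2 + a3^3/8)*u
        + (a0 - a1*a3/4 + a2*a3^2/16 - 3*a3^4/256) := by
      intro u
      have h := hx (u - a3/4)
      have heq : u^4 + (a2 - 3*a3^2/8)*u^2 + (a1 - a2*a3/2 + a3^3/8)*u
          + (a0 - a1*a3/4 + a2*a3^2/16 - 3*a3^4/256)
          = (u - a3/4)^4 + a3*(u - a3/4)^3 + a2*(u - a3/4)^2 + a1*(u - a3/4) + a0 := by ring
      rw [heq]; exact h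
    obtain ⟨m, w1, w2, -, h1, h2, h3, hd1, hd2⟩ := factor_depressed _ _ _ hdep
    obtain ⟨hm2, hm3⟩ := stmt11_minors a0 a1 a2 a3 L hnn hL m w1 w2 h1 h2 h3 hd1 hd2
    clear h1 h2 h3 hd1 hd2 hx hdep hf hnn hL
    have hperm : ∀ u v w : ℝ, ¬(u = 0 ∧ v = 0 ∧ w = 0) →
        0 < u^2 + a3*u*v + (a2-L)*u*w + L*v^2 + a1*v*w + a0*w^2 := by
      intro u v w hne
      have iden : (L - a3^2/4) * (u^2 + a3*u*v + (a2-L)*u*w + L*v^2 + a1*v*w + a0*w^2)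
          = (L - a3^2/4)*(u + a3/2*v + (a2-L)/2*w)^2
            + ((L - a3^2/4)*v + (a1/2 - a3*(a2-L)/4)*w)^2
            + (L*a0 - a1^2/4 - a3^2*a0/4 + a3*a1*(a2-L)/4 - L*(a2-L)^2/4)*w^2 := by
        ring
      have hQm : 0 < (L - a3^2/4) * (u^2 + a3*u*v + (a2-L)*u*w + L*v^2 + a1*v*w + a0*w^2) := by
        rw [iden]
        have t1 : 0 ≤ (L - a3^2/4)*(u + a3/2*v + (a2-L)/2*w)^2 :=
          mul_nonneg hm2.le (sq_nonneg _)
        have t2 : 0 ≤ ((L - a3^2/4)*v + (a1/2 - a3*(a2-L)/4)*w)^2 := sq_nonneg _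
        have t3 : 0 ≤ (L*a0 - a1^2/4 - a3^2*a0/4 + a3*a1*(a2-L)/4 - L*(a2-L)^2/4)*w^2 :=
          mul_nonneg hm3.le (sq_nonneg _)
        by_cases hw : w = 0
        · subst hw
          by_cases hv : v = 0
          · subst hv
            have hu : u ≠ 0 := by tauto
            have hup : 0 < (L - a3^2/4)*(u + a3/2*0 + (a2-L)/2*0)^2 := by
              apply mul_pos hm2
              have : u + a3/2*0 + (a2-L)/2*0 = u := by ring
              rw [this]
              positivity
            linarith
          · have hvp : 0 < ((L - a3^2/4)*v + (a1/2 - a3*(a2-L)/4)*0)^2 := by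
              have : (L - a3^2/4)*v + (a1/2 - a3*(a2-L)/4)*0 = (L - a3^2/4)*v := by ring
              rw [this]
              positivity
            linarith
        · have hwp : 0 < (L*a0 - a1^2/4 - a3^2*a0/4 + a3*a1*(a2-L)/4 - L*(a2-L)^2/4)*w^2 :=
            mul_pos hm3 (by positivity)
          linarith
      rcases mul_pos_iff.mp hQm with ⟨-, hb⟩ | ⟨ha, -⟩
      · exact hb
      · linarith
    rw [Matrix.posDef_iff_dotProduct_mulVec]
    constructor
    · ext i j
      fin_cases i <;> fin_cases j <;> simp [Matrix.conjTranspose_apply]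
    · intro x hx0
      have hne : ¬(x 0 = 0 ∧ x 1 = 0 ∧ x 2 = 0) := by
        rintro ⟨e0, e1, e2⟩
        apply hx0
        ext i
        fin_cases i <;> assumption
      have := hperm (x 0) (x 1) (x 2) hne
      simp [Matrix.mulVec, dotProduct, Fin.sum_univ_three]
      nlinarith [this]
  · intro hM x y hxy
    have hv : (![x^2, x*y, y^2] : Fin 3 → ℝ) ≠ 0 := by
      intro h
      apply hxy
      have h0 := congrFun h 0
      have h2 := congrFun h 2
      simp at h0 h2
      simp [h0, h2]
    have h := (Matrix.posDef_iff_dotProduct_mulVec.mp hM).2 hv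
    simp [Matrix.mulVec, dotProduct, Fin.sum_univ_three] at h
    nlinarith [h]
end
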